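/- Let A be a polynomial in the coefficients a_0, …, a_n that is homogeneous of degree g and isobaric of weight p, and let k ≥ 1. Then D^[k](Δ A) − Δ(D^[k] A) = (k·((n·g : ℚ) − 2·p + k − 1)) • (D^[k−1] A), where D^[k] denotes the k-fold iterate of D. -/

import Mathlib

open MvPolynomial Finsupp

/-- The weight function assigning weight `i` to the coefficient variable `aᵢ`. -/
def wt (n : ℕ) : Fin (n + 1) → ℕ := fun i => (i : ℕ)

/-- The lowering operator `D A = Σ_{i=0}^{n-1} (i+1) · aᵢ · ∂A/∂a_{i+1}`. -/
noncomputable def Dop (n : ℕ) (A : MvPolynomial (Fin (n + 1)) ℚ) :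
    MvPolynomial (Fin (n + 1)) ℚ :=
  ∑ i : Fin n, C ((i : ℕ) + 1 : ℚ) * X i.castSucc * pderiv i.succ A

/-- The raising operator `Δ A = Σ_{i=0}^{n-1} (n-i) · a_{i+1} · ∂A/∂aᵢ`. -/
noncomputable def Δop (n : ℕ) (A : MvPolynomial (Fin (n + 1)) ℚ) :
    MvPolynomial (Fin (n + 1)) ℚ :=
  ∑ i : Fin n, C ((n - (i : ℕ) : ℕ) : ℚ) * X i.succ * pderiv i.castSucc A


lemma pderiv_comm' {σ : Type*} (a b : σ) (A : MvPolynomial σ ℚ) :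
    pderiv a (pderiv b A) = pderiv b (pderiv a A) := by
  induction A using MvPolynomial.induction_on' with
  | monomial d c =>
    classical
    simp only [pderiv_monomial]
    by_cases h : a = b
    · subst h; rfl
    · congr 1
      · rw [tsub_tsub, tsub_tsub, add_comm]
      · rw [Finsupp.tsub_apply, Finsupp.tsub_apply,
          Finsupp.single_eq_of_ne' h, Finsupp.single_eq_of_ne' (Ne.symm h)]
        simp only [Nat.sub_zero]; ring
  | add p q hp hq => simp [hp, hq]

lemma X_mul_pderiv_monomial {σ : Type*} (j : σ) (d : σ →₀ ℕ) (c : ℚ) :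
    X j * pderiv j (monomial d c) = ((d j : ℚ)) • monomial d c := by
  classical
  rw [pderiv_monomial]
  by_cases h : d j = 0
  · simp [h]
  · rw [X, monomial_mul, smul_monomial]
    congr 1
    · rw [add_tsub_cancel_of_le]
      rwa [Finsupp.single_le_iff, Nat.one_le_iff_ne_zero]
    · rw [smul_eq_mul]; ring
/-- Euler identity for weighted homogeneous polynomials. -/
lemma euler_wh {σ : Type*} [Fintype σ] (w : σ → ℕ) (m : ℕ) (A : MvPolynomial σ ℚ)
    (h : A.IsWeightedHomogeneous w m) :
    ∑ j : σ, (w j : ℚ) • (X j * pderiv j A) = (m : ℚ) • A := by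
  classical
  conv_lhs => rw [A.as_sum]
  simp only [map_sum, Finset.mul_sum, Finset.smul_sum, X_mul_pderiv_monomial]
  rw [Finset.sum_comm]
  conv_rhs => rw [A.as_sum, Finset.smul_sum]
  refine Finset.sum_congr rfl fun d hd => ?_
  have hw : (weight w) d = m := h (MvPolynomial.mem_support_iff.mp hd)
  have hsum : ∑ j : σ, (w j : ℚ) * (d j : ℚ) = (m : ℚ) := by
    rw [← hw, weight_apply, Finsupp.sum, Nat.cast_sum,
      ← Finset.sum_subset (Finset.subset_univ d.support)
        (fun j _ hj => by rw [Finsupp.notMem_support_iff] at hj; simp [hj])]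
    exact Finset.sum_congr rfl fun j _ => by rw [smul_eq_mul, Nat.cast_mul, mul_comm]
  calc ∑ j : σ, (w j : ℚ) • ((d j : ℚ) • monomial d (coeff d A))
      = ∑ j : σ, ((w j : ℚ) * (d j : ℚ)) • monomial d (coeff d A) := by
        simp [smul_smul]
    _ = (m : ℚ) • monomial d (coeff d A) := by
        rw [← Finset.sum_smul, hsum]

/-- pderiv of a WH polynomial vanishes if the variable's weight exceeds the degree. -/
lemma pderiv_eq_zero_of_wh_lt {σ : Type*} {w : σ → ℕ} {m : ℕ} {A : MvPolynomial σ ℚ}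
    (h : A.IsWeightedHomogeneous w m) {b : σ} (hb : m < w b) : pderiv b A = 0 := by
  classical
  conv_lhs => rw [A.as_sum]
  rw [map_sum]
  refine Finset.sum_eq_zero fun d hd => ?_
  have hdb : d b = 0 := by
    by_contra h'
    have h2 := Finsupp.le_weight_of_ne_zero' (w := w) h'
    rw [h (MvPolynomial.mem_support_iff.mp hd)] at h2
    omega
  simp [pderiv_monomial, hdb]

lemma isWH_X_mul_pderiv {σ : Type*} {w : σ → ℕ} {A : MvPolynomial σ ℚ} {m m' : ℕ}
    (a b : σ) (h : A.IsWeightedHomogeneous w m) (hm : w a + m = m' + w b) :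
    (X a * pderiv b A).IsWeightedHomogeneous w m' := by
  classical
  rw [← mem_weightedHomogeneousSubmodule, A.as_sum, map_sum, Finset.mul_sum]
  refine Submodule.sum_mem _ fun d hd => ?_
  rw [pderiv_monomial]
  by_cases hdb : d b = 0
  · simp [hdb]
  · have hble : Finsupp.single b 1 ≤ d := by
      rwa [Finsupp.single_le_iff, Nat.one_le_iff_ne_zero]
    rw [X, monomial_mul, one_mul]
    rw [mem_weightedHomogeneousSubmodule]
    refine isWeightedHomogeneous_monomial _ _ _ ?_
    have h1 : weight w (d - Finsupp.single b 1) + weight w (Finsupp.single b 1) = weight w d := by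
      rw [← map_add, tsub_add_cancel_of_le hble]
    have h2 : weight w (Finsupp.single b 1) = w b := by
      simp [weight_apply, Finsupp.sum_single_index]
    have h3 : weight w d = m := h (MvPolynomial.mem_support_iff.mp hd)
    have h4 : weight w (Finsupp.single a 1) = w a := by
      simp [weight_apply, Finsupp.sum_single_index]
    obtain ⟨q, hq⟩ : ∃ q, weight w (d - Finsupp.single b 1) = q := ⟨_, rfl⟩
    rw [hq, h2, h3] at h1
    rw [map_add, h4, hq]
    omega

section comm1

variable {n g p : ℕ} {A : MvPolynomial (Fin (n + 1)) ℚ}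

lemma expandD (B : MvPolynomial (Fin (n+1)) ℚ) (i : Fin n) :
    pderiv i.succ (Δop n B) =
      C ((n - (i : ℕ) : ℕ) : ℚ) * pderiv i.castSucc B +
      ∑ j : Fin n, C ((n - (j : ℕ) : ℕ) : ℚ) *
        (X j.succ * pderiv i.succ (pderiv j.castSucc B)) := by
  rw [Δop, map_sum]
  have : ∀ j : Fin n, pderiv i.succ (C ((n - (j : ℕ) : ℕ) : ℚ) * X j.succ * pderiv j.castSucc B)
      = (if j = i then C ((n - (j : ℕ) : ℕ) : ℚ) * pderiv j.castSucc B else 0)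
        + C ((n - (j : ℕ) : ℕ) : ℚ) * (X j.succ * pderiv i.succ (pderiv j.castSucc B)) := by
    intro j
    rw [mul_assoc, pderiv_C_mul, pderiv_mul]
    by_cases h : j = i
    · subst h; simp [mul_add]
    · rw [pderiv_X_of_ne (fun hc => h (Fin.succ_injective _ hc))]
      simp [h, mul_add]
  rw [Finset.sum_congr rfl fun j _ => this j, Finset.sum_add_distrib,
    Finset.sum_ite_eq' Finset.univ i
      (fun j => C ((n - (j : ℕ) : ℕ) : ℚ) * pderiv j.castSucc B)]
  simp

lemma expandΔ (B : MvPolynomial (Fin (n+1)) ℚ) (j : Fin n) :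
    pderiv j.castSucc (Dop n B) =
      C ((j : ℕ) + 1 : ℚ) * pderiv j.succ B +
      ∑ i : Fin n, C ((i : ℕ) + 1 : ℚ) *
        (X i.castSucc * pderiv j.castSucc (pderiv i.succ B)) := by
  rw [Dop, map_sum]
  have : ∀ i : Fin n, pderiv j.castSucc (C ((i : ℕ) + 1 : ℚ) * X i.castSucc * pderiv i.succ B)
      = (if i = j then C ((i : ℕ) + 1 : ℚ) * pderiv i.succ B else 0)
        + C ((i : ℕ) + 1 : ℚ) * (X i.castSucc * pderiv j.castSucc (pderiv i.succ B)) := by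
    intro i
    rw [mul_assoc, pderiv_C_mul, pderiv_mul]
    by_cases h : i = j
    · subst h; simp [mul_add]
    · rw [pderiv_X_of_ne (fun hc => h (Fin.castSucc_injective _ hc))]
      simp [h, mul_add]
  rw [Finset.sum_congr rfl fun i _ => this i, Finset.sum_add_distrib,
    Finset.sum_ite_eq' Finset.univ j
      (fun i => C ((i : ℕ) + 1 : ℚ) * pderiv i.succ B)]
  simp

set_option maxHeartbeats 1000000 in
lemma comm1 (hg : A.IsHomogeneous g) (hp : A.IsWeightedHomogeneous (wt n) p) :
    Dop n (Δop n A) - Δop n (Dop n A) = (((n * g : ℕ) : ℚ) - 2 * (p : ℚ)) • A := by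
  have hD : Dop n (Δop n A) =
      (∑ i : Fin n, C (((i : ℕ) + 1 : ℚ) * ((n - (i : ℕ) : ℕ) : ℚ)) *
        (X i.castSucc * pderiv i.castSucc A)) +
      ∑ i : Fin n, ∑ j : Fin n, C ((i : ℕ) + 1 : ℚ) * C ((n - (j : ℕ) : ℕ) : ℚ) *
        (X i.castSucc * (X j.succ * pderiv i.succ (pderiv j.castSucc A))) := by
    rw [Dop]
    rw [Finset.sum_congr rfl fun i _ => by rw [expandD A i]]
    simp only [mul_add, Finset.mul_sum, Finset.sum_add_distrib]
    congr 1
    · refine Finset.sum_congr rfl fun i _ => ?_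
      rw [C_mul]; ring
    · exact Finset.sum_congr rfl fun i _ => Finset.sum_congr rfl fun j _ => by ring
  have hΔ : Δop n (Dop n A) =
      (∑ i : Fin n, C (((i : ℕ) + 1 : ℚ) * ((n - (i : ℕ) : ℕ) : ℚ)) *
        (X i.succ * pderiv i.succ A)) +
      ∑ i : Fin n, ∑ j : Fin n, C ((i : ℕ) + 1 : ℚ) * C ((n - (j : ℕ) : ℕ) : ℚ) *
        (X i.castSucc * (X j.succ * pderiv i.succ (pderiv j.castSucc A))) := by
    rw [Δop]
    rw [Finset.sum_congr rfl fun j _ => by rw [expandΔ A j]]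
    simp only [mul_add, Finset.mul_sum, Finset.sum_add_distrib]
    refine congrArg₂ (· + ·) ?_ ?_
    · refine Finset.sum_congr rfl fun i _ => ?_
      rw [C_mul]; ring
    · rw [Finset.sum_comm]
      refine Finset.sum_congr rfl fun i _ => Finset.sum_congr rfl fun j _ => ?_
      rw [pderiv_comm' j.castSucc i.succ A]
      ring
  rw [hD, hΔ, add_sub_add_right_eq_sub]
  have cast1 : ∀ i : Fin n, ((n - (i : ℕ) : ℕ) : ℚ) = (n : ℚ) - (i : ℕ) := fun i =>
    Nat.cast_sub i.isLt.le
  have hS1 : (∑ i : Fin n, C (((i : ℕ) + 1 : ℚ) * ((n - (i : ℕ) : ℕ) : ℚ)) *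
        (X i.castSucc * pderiv i.castSucc A)) =
      ∑ j : Fin (n+1), C (((j : ℕ) + 1 : ℚ) * ((n : ℚ) - (j : ℕ))) * (X j * pderiv j A) := by
    rw [Fin.sum_univ_castSucc]
    simp only [Fin.coe_castSucc, Fin.val_last, sub_self, mul_zero, map_zero, zero_mul, add_zero]
    exact Finset.sum_congr rfl fun i _ => by rw [cast1 i]
  have hS2 : (∑ i : Fin n, C (((i : ℕ) + 1 : ℚ) * ((n - (i : ℕ) : ℕ) : ℚ)) *
        (X i.succ * pderiv i.succ A)) =
      ∑ j : Fin (n+1), C ((j : ℕ) * ((n : ℚ) + 1 - (j : ℕ))) * (X j * pderiv j A) := by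
    rw [Fin.sum_univ_succ]
    simp only [Fin.val_zero, Nat.cast_zero, zero_mul, map_zero, zero_add, Fin.val_succ]
    refine Finset.sum_congr rfl fun i _ => ?_
    rw [cast1 i]
    push_cast
    ring_nf
  rw [hS1, hS2, ← Finset.sum_sub_distrib]
  have hstep : ∀ j : Fin (n+1),
      C (((j : ℕ) + 1 : ℚ) * ((n : ℚ) - (j : ℕ))) * (X j * pderiv j A) -
      C ((j : ℕ) * ((n : ℚ) + 1 - (j : ℕ))) * (X j * pderiv j A) =
      (n : ℚ) • (((1 : Fin (n+1) → ℕ) j : ℚ) • (X j * pderiv j A)) -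
        (2 : ℚ) • (((wt n j : ℕ) : ℚ) • (X j * pderiv j A)) := by
    intro j
    rw [← sub_mul, ← map_sub]
    have : (((j : ℕ) + 1 : ℚ) * ((n : ℚ) - (j : ℕ))) - ((j : ℕ) * ((n : ℚ) + 1 - (j : ℕ)))
        = (n : ℚ) - 2 * (j : ℕ) := by ring
    rw [this, C_mul']
    simp only [Pi.one_apply, Nat.cast_one, one_smul, wt, smul_smul]
    rw [← sub_smul]
  rw [Finset.sum_congr rfl fun j _ => hstep j, Finset.sum_sub_distrib,
    ← Finset.smul_sum, ← Finset.smul_sum,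
    euler_wh (1 : Fin (n+1) → ℕ) g A hg, euler_wh (wt n) p A hp,
    smul_smul, smul_smul, ← sub_smul]
  congr 1
  push_cast
  ring


end comm1

section ops
variable {n g p : ℕ} {A B : MvPolynomial (Fin (n + 1)) ℚ}

lemma Dop_add : Dop n (A + B) = Dop n A + Dop n B := by
  simp [Dop, map_add, mul_add, Finset.sum_add_distrib]

lemma Dop_smul (c : ℚ) (A : MvPolynomial (Fin (n + 1)) ℚ) :
    Dop n (c • A) = c • Dop n A := by
  simp [Dop, map_smul, Finset.smul_sum, mul_smul_comm]

lemma Dop_zero : Dop n (0 : MvPolynomial (Fin (n + 1)) ℚ) = 0 := by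
  simp [Dop]

lemma Dop_homog (hg : A.IsHomogeneous g) : (Dop n A).IsHomogeneous g := by
  rw [IsHomogeneous] at hg ⊢
  rw [← mem_weightedHomogeneousSubmodule, Dop]
  refine Submodule.sum_mem _ fun i _ => ?_
  rw [mul_assoc, mem_weightedHomogeneousSubmodule]
  have h1 : (X (i.castSucc) * pderiv i.succ A).IsWeightedHomogeneous 1 g :=
    isWH_X_mul_pderiv _ _ hg (by simp; omega)
  have := (isWeightedHomogeneous_C (1 : Fin (n+1) → ℕ) (((i : ℕ) + 1 : ℚ))).mul h1
  rwa [zero_add] at this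

lemma Dop_wh_zero (hp : A.IsWeightedHomogeneous (wt n) 0) : Dop n A = 0 := by
  rw [Dop]
  refine Finset.sum_eq_zero fun i _ => ?_
  rw [pderiv_eq_zero_of_wh_lt hp (by simp [wt]), mul_zero]

lemma Dop_wh (hp : A.IsWeightedHomogeneous (wt n) p) :
    (Dop n A).IsWeightedHomogeneous (wt n) (p - 1) := by
  cases p with
  | zero => rw [Dop_wh_zero hp]; exact isWeightedHomogeneous_zero _ _ _
  | succ q =>
    rw [← mem_weightedHomogeneousSubmodule, Dop]
    refine Submodule.sum_mem _ fun i _ => ?_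
    rw [mul_assoc, mem_weightedHomogeneousSubmodule]
    have h1 : (X (i.castSucc) * pderiv i.succ A).IsWeightedHomogeneous (wt n) q :=
      isWH_X_mul_pderiv _ _ hp (by simp [wt]; omega)
    have := (isWeightedHomogeneous_C (wt n) (((i : ℕ) + 1 : ℚ))).mul h1
    rwa [zero_add] at this

lemma iter_homog (hg : A.IsHomogeneous g) (k : ℕ) :
    ((Dop n)^[k] A).IsHomogeneous g := by
  induction k with
  | zero => simpa using hg
  | succ k ih => rw [Function.iterate_succ_apply']; exact Dop_homog ih

lemma iter_wh (hp : A.IsWeightedHomogeneous (wt n) p) (k : ℕ) :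
    ((Dop n)^[k] A).IsWeightedHomogeneous (wt n) (p - k) := by
  induction k with
  | zero => simpa using hp
  | succ k ih =>
    rw [Function.iterate_succ_apply']
    have := Dop_wh ih
    rwa [Nat.sub_sub] at this

lemma key (n g p : ℕ) (A : MvPolynomial (Fin (n + 1)) ℚ)
    (hg : A.IsHomogeneous g) (hp : A.IsWeightedHomogeneous (wt n) p) (k : ℕ) :
    (Dop n)^[k + 1] (Δop n A) - Δop n ((Dop n)^[k + 1] A) =
      (((k : ℚ) + 1) * (((n * g : ℕ) : ℚ) - 2 * (p : ℚ) + ((k : ℚ) + 1) - 1)) •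
        (Dop n)^[k] A := by
  induction k with
  | zero =>
    simp only [zero_add, Function.iterate_one, Function.iterate_zero, id_eq, Nat.cast_zero]
    rw [comm1 hg hp]
    congr 1
    ring
  | succ k ih =>
    set B := (Dop n)^[k + 1] A with hBdef
    have hB : B.IsHomogeneous g := iter_homog hg (k + 1)
    have hBw : B.IsWeightedHomogeneous (wt n) (p - (k + 1)) := iter_wh hp (k + 1)
    set c : ℚ := ((k : ℚ) + 1) * (((n * g : ℕ) : ℚ) - 2 * (p : ℚ) + ((k : ℚ) + 1) - 1)
      with hc
    have ih' : (Dop n)^[k + 1] (Δop n A) = Δop n B + c • (Dop n)^[k] A := by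
      rw [← ih]; ring
    have e1 : (Dop n)^[k + 1 + 1] (Δop n A) = Dop n ((Dop n)^[k + 1] (Δop n A)) :=
      Function.iterate_succ_apply' _ _ _
    have e2 : (Dop n)^[k + 1 + 1] A = Dop n B := Function.iterate_succ_apply' _ _ _
    have e3 : Dop n ((Dop n)^[k] A) = B := (Function.iterate_succ_apply' _ _ _).symm
    rw [e1, e2, ih', Dop_add, Dop_smul, e3]
    have hcomm := comm1 hB hBw
    have hmain : Dop n (Δop n B) + c • B - Δop n (Dop n B) =
        ((((n * g : ℕ) : ℚ) - 2 * ((p - (k + 1) : ℕ) : ℚ)) + c) • B := by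
      rw [add_smul, ← hcomm]; ring
    rw [hmain]
    by_cases hkp : k + 1 ≤ p
    · rw [Nat.cast_sub hkp]
      congr 1
      rw [hc]
      push_cast
      ring
    · have hp0 : ((Dop n)^[p]) A |>.IsWeightedHomogeneous (wt n) 0 := by
        have := iter_wh hp p; rwa [Nat.sub_self] at this
      have hzero : B = 0 := by
        have hsplit : k + 1 = (k - p) + (p + 1) := by omega
        rw [hBdef, hsplit, Function.iterate_add_apply, Function.iterate_succ_apply',
          Dop_wh_zero hp0]
        exact Function.iterate_fixed Dop_zero _
      rw [hzero, smul_zero, smul_zero]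

end ops

/-- If `A` is homogeneous of degree `g` and isobaric of weight `p`, and `k ≥ 1`,
then `Dᵏ(Δ A) − Δ(Dᵏ A) = k·(n·g − 2·p + k − 1) • Dᵏ⁻¹ A`. -/
theorem Dop_iterate_Δop_comm (n g p k : ℕ) (hk : 1 ≤ k)
    (A : MvPolynomial (Fin (n + 1)) ℚ)
    (hg : A.IsHomogeneous g) (hp : A.IsWeightedHomogeneous (wt n) p) :
    (Dop n)^[k] (Δop n A) - Δop n ((Dop n)^[k] A) =
      ((k : ℚ) * (((n * g : ℕ) : ℚ) - 2 * (p : ℚ) + (k : ℚ) - 1)) •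
        (Dop n)^[k - 1] A := by
  cases k with
  | zero => omega
  | succ k' =>
    have h := key n g p A hg hp k'
    rw [Nat.succ_sub_one]
    convert h using 3 <;> push_cast <;> ring
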